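/- arXiv:2408.14590 — 2 statements merged into one kernel-verified Lean document; each statement's English description precedes it below -/
import Mathlib

section
/- For a finite metric space (X,d) with at least two points and any t > 0, the derivative of the spread is strictly positive: σ_d'(t) > 0. -/
/-- For a finite metric space `(X,d)` with at least two points and any `t > 0`,
the derivative of the spread is strictly positive. -/
theorem spread_deriv_pos {X : Type*} [MetricSpace X] [Fintype X]
    (hcard : 2 ≤ Fintype.card X) (t : ℝ) (ht : 0 < t) :
    0 < deriv (fun t : ℝ => ∑ x : X, 1 / ∑ y : X, Real.exp (-t * dist x y)) t := by
  have hne : Nonempty X := Fintype.card_pos_iff.mp (by omega)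
  have hgpos : ∀ (s : ℝ) (x : X), 0 < ∑ y : X, Real.exp (-s * dist x y) :=
    fun s x => Finset.sum_pos (fun y _ => Real.exp_pos _) Finset.univ_nonempty
  -- derivative of inner sum
  have hg : ∀ x : X, HasDerivAt (fun s : ℝ => ∑ y : X, Real.exp (-s * dist x y))
      (∑ y : X, Real.exp (-t * dist x y) * (-1 * dist x y)) t := by
    intro x
    apply HasDerivAt.fun_sum
    intro y _
    exact (((hasDerivAt_id t).neg.mul_const (dist x y)).exp)
  have hF : HasDerivAt (fun s : ℝ => ∑ x : X, 1 / ∑ y : X, Real.exp (-s * dist x y))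
      (∑ x : X, -(∑ y : X, Real.exp (-t * dist x y) * (-1 * dist x y)) /
        (∑ y : X, Real.exp (-t * dist x y)) ^ 2) t := by
    apply HasDerivAt.fun_sum
    intro x _
    simp only [one_div]
    exact (hg x).inv (ne_of_gt (hgpos t x))
  rw [hF.deriv]
  have hrw : ∀ x : X, -(∑ y : X, Real.exp (-t * dist x y) * (-1 * dist x y))
      = ∑ y : X, dist x y * Real.exp (-t * dist x y) := by
    intro x
    rw [← Finset.sum_neg_distrib]
    congr 1; ext y; ring
  have hterm_nonneg : ∀ x : X, 0 ≤ -(∑ y : X, Real.exp (-t * dist x y) * (-1 * dist x y)) /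
      (∑ y : X, Real.exp (-t * dist x y)) ^ 2 := by
    intro x
    apply div_nonneg
    · rw [hrw x]
      exact Finset.sum_nonneg fun y _ => mul_nonneg dist_nonneg (Real.exp_pos _).le
    · positivity
  obtain ⟨x0⟩ := hne
  obtain ⟨y0, hy0⟩ := Fintype.exists_ne_of_one_lt_card (by omega) x0
  apply Finset.sum_pos' (fun x _ => hterm_nonneg x) ⟨x0, Finset.mem_univ x0, ?_⟩
  apply div_pos
  · rw [hrw x0]
    apply Finset.sum_pos' (fun y _ => mul_nonneg dist_nonneg (Real.exp_pos _).le)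
    exact ⟨y0, Finset.mem_univ y0,
      mul_pos (dist_pos.mpr (by simpa [eq_comm] using hy0)) (Real.exp_pos _)⟩
  · have := hgpos t x0; positivity
end

section
/- For a finite metric space (X,d), the spread dimension tends to 0 as t → ∞: t·σ_d'(t)/σ_d(t) → 0. -/
set_option maxHeartbeats 1000000

open Real Filter Finset

section aux

variable {X : Type*} [MetricSpace X] [Fintype X] [Nonempty X]

private lemma S_pos (x : X) (t : ℝ) : 0 < ∑ y : X, Real.exp (-t * dist x y) :=
  Finset.sum_pos (fun y _ => Real.exp_pos _) Finset.univ_nonempty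

private lemma one_le_S (x : X) (t : ℝ) : 1 ≤ ∑ y : X, Real.exp (-t * dist x y) := by
  have h := Finset.single_le_sum (f := fun y : X => Real.exp (-t * dist x y))
    (fun y _ => (Real.exp_pos _).le) (Finset.mem_univ x)
  simpa using h

private lemma hasDerivAt_spread (t : ℝ) :
    HasDerivAt (fun t : ℝ => ∑ x : X, 1 / ∑ y : X, Real.exp (-t * dist x y))
      (∑ x : X, (∑ z : X, dist x z * Real.exp (-t * dist x z)) /
        (∑ y : X, Real.exp (-t * dist x y)) ^ 2) t := by
  simp only [one_div]
  apply HasDerivAt.fun_sum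
  intro x _
  have hS : HasDerivAt (fun t : ℝ => ∑ y : X, Real.exp (-t * dist x y))
      (∑ y : X, Real.exp (-t * dist x y) * (-1 * dist x y)) t := by
    apply HasDerivAt.fun_sum
    intro y _
    exact ((hasDerivAt_id t).neg.mul_const (dist x y)).exp
  have h := hS.inv (ne_of_gt (S_pos x t))
  have hnum : (-∑ y : X, Real.exp (-t * dist x y) * (-1 * dist x y)) =
      ∑ z : X, dist x z * Real.exp (-t * dist x z) := by
    rw [← Finset.sum_neg_distrib]
    apply Finset.sum_congr rfl
    intros
    ring
  rw [← hnum]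
  exact h

end aux

/-- For a finite metric space `(X,d)`, the spread dimension tends to `0` as `t → ∞`:
`t·σ_d'(t)/σ_d(t) → 0`. -/
theorem spreadDimension_tendsto_zero {X : Type*} [MetricSpace X] [Fintype X] [Nonempty X] :
    Filter.Tendsto
      (fun t : ℝ =>
        t * deriv (fun t : ℝ => ∑ x : X, 1 / ∑ y : X, Real.exp (-t * dist x y)) t /
          (∑ x : X, 1 / ∑ y : X, Real.exp (-t * dist x y)))
      Filter.atTop (nhds 0) := by
  set g : ℝ → ℝ := fun t => ∑ x : X, ∑ z : X, (t * dist x z) * Real.exp (-t * dist x z) with hg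
  have hgtends : Tendsto g atTop (nhds 0) := by
    have : Tendsto (fun t : ℝ => ∑ x : X, ∑ z : X, (t * dist x z) * Real.exp (-t * dist x z))
        atTop (nhds (∑ x : X, ∑ z : X, (0:ℝ))) := by
      apply tendsto_finset_sum
      intro x _
      apply tendsto_finset_sum
      intro z _
      rcases eq_or_lt_of_le (dist_nonneg (x := x) (y := z)) with hd | hd
      · simp [← hd]
      · have h1 : Tendsto (fun u : ℝ => u * Real.exp (-u)) atTop (nhds 0) := by
          have := Real.tendsto_pow_mul_exp_neg_atTop_nhds_zero 1
          simpa using this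
        have h2 : Tendsto (fun t : ℝ => t * dist x z) atTop atTop :=
          Tendsto.atTop_mul_const hd tendsto_id
        have := h1.comp h2
        convert this using 2 with t
        simp [Function.comp, neg_mul]
      done
    simpa only [hg, neg_mul, Finset.sum_const_zero] using this
  apply squeeze_zero_norm' (a := g) _ hgtends
  filter_upwards [eventually_ge_atTop (0:ℝ)] with t ht
  have hderiv := (hasDerivAt_spread (X := X) t).deriv
  rw [hderiv]
  set D : ℝ := ∑ x : X, (∑ z : X, dist x z * Real.exp (-t * dist x z)) /
      (∑ y : X, Real.exp (-t * dist x y)) ^ 2 with hD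
  set σ : ℝ := ∑ x : X, 1 / ∑ y : X, Real.exp (-t * dist x y) with hσ
  have hDnonneg : 0 ≤ D := by
    apply Finset.sum_nonneg
    intro x _
    positivity
  have hσ1 : (1:ℝ) ≤ σ := by
    have hcard : 0 < (Fintype.card X : ℝ) := by
      exact_mod_cast Fintype.card_pos
    have hterm : ∀ x : X, (1 : ℝ) / (Fintype.card X : ℝ) ≤ 1 / ∑ y : X, Real.exp (-t * dist x y) := by
      intro x
      apply one_div_le_one_div_of_le (S_pos x t)
      calc ∑ y : X, Real.exp (-t * dist x y) ≤ ∑ y : X, (1:ℝ) := by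
            apply Finset.sum_le_sum
            intro y _
            rw [Real.exp_le_one_iff]
            have : 0 ≤ t * dist x y := mul_nonneg ht dist_nonneg
            linarith
        _ = (Fintype.card X : ℝ) := by simp
    calc (1:ℝ) = ∑ _x : X, (1:ℝ) / (Fintype.card X : ℝ) := by
          rw [Finset.sum_const]
          simp
      _ ≤ σ := Finset.sum_le_sum (fun x _ => hterm x)
  have hσpos : (0:ℝ) < σ := lt_of_lt_of_le one_pos hσ1
  have hF_nonneg : 0 ≤ t * D / σ := div_nonneg (mul_nonneg ht hDnonneg) hσpos.le
  rw [Real.norm_eq_abs, abs_of_nonneg hF_nonneg]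
  have h1 : t * D / σ ≤ t * D := div_le_self (by positivity) hσ1
  have h2 : t * D ≤ g t := by
    rw [hg, hD, Finset.mul_sum]
    apply Finset.sum_le_sum
    intro x _
    have hS2 : 1 ≤ (∑ y : X, Real.exp (-t * dist x y)) ^ 2 := by
      have := one_le_S x t
      nlinarith
    have hnum : 0 ≤ ∑ z : X, dist x z * Real.exp (-t * dist x z) := by positivity
    calc t * ((∑ z : X, dist x z * Real.exp (-t * dist x z)) /
          (∑ y : X, Real.exp (-t * dist x y)) ^ 2)
        ≤ t * ((∑ z : X, dist x z * Real.exp (-t * dist x z)) / 1) := by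
          apply mul_le_mul_of_nonneg_left _ ht
          apply div_le_div_of_nonneg_left hnum one_pos hS2 |>.trans_eq (by ring)
      _ = ∑ z : X, (t * dist x z) * Real.exp (-t * dist x z) := by
          rw [div_one, Finset.mul_sum]
          apply Finset.sum_congr rfl
          intros; ring
  linarith
end
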